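/- For any simple graph G on n ≥ 3 vertices, the number of unordered pairs of distinct vertices whose degrees differ by at most 1 is at least ⌈n/2⌉ + 1. -/

import Mathlib

open scoped Classical

namespace CCAux

def lC : List ℕ → ℕ
  | [] => 0
  | a :: t => t.countP (fun x => decide (x ≤ a + 1)) + lC t

def gl : ℕ → List ℕ → ℕ
  | a, [] => a
  | _, b :: t => gl b t

theorem gl_mem : ∀ (t : List ℕ) (a : ℕ), gl a t ∈ a :: t := by
  intro t
  induction t with
  | nil => intro a; simp [gl]
  | cons b t' ih =>
    intro a
    have := ih b
    simp [gl] at this ⊢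
    tauto

theorem L1 : ∀ (t : List ℕ) (a : ℕ), (a :: t).Pairwise (· ≤ ·) →
    2 * (a :: t).length + a ≤ 2 * lC (a :: t) + gl a t + 2 := by
  intro t
  induction t with
  | nil => intro a _; simp [lC, gl]; omega
  | cons b t' ih =>
    intro a hs
    obtain ⟨hle, hs'⟩ := List.pairwise_cons.mp hs
    have hab : a ≤ b := hle b (by simp)
    have hih := ih b hs'
    have hlc : lC (a :: b :: t') =
        (b :: t').countP (fun x => decide (x ≤ a + 1)) + lC (b :: t') := rfl
    have hgl : gl a (b :: t') = gl b t' := rfl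
    by_cases hba : b ≤ a + 1
    · have hcp : (b :: t').countP (fun x => decide (x ≤ a + 1)) =
          t'.countP (fun x => decide (x ≤ a + 1)) + 1 :=
        List.countP_cons_of_pos (by simpa using hba)
      simp only [List.length_cons] at *
      omega
    · simp only [List.length_cons] at *
      omega

/-- extremal pattern: blocks of size 1 or 2 of equal values, consecutive blocks differ by 2 -/
inductive Q : List ℕ → Prop
  | one (a : ℕ) : Q [a]
  | two (a : ℕ) : Q [a, a]
  | cons1 (a : ℕ) (t : List ℕ) (h : Q ((a + 2) :: t)) : Q (a :: (a + 2) :: t)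
  | cons2 (a : ℕ) (t : List ℕ) (h : Q ((a + 2) :: t)) : Q (a :: a :: (a + 2) :: t)

theorem L2 : ∀ (t : List ℕ) (a : ℕ), (a :: t).Pairwise (· ≤ ·) →
    2 * (a :: t).length + a = 2 * lC (a :: t) + gl a t + 2 → Q (a :: t) := by
  intro t
  induction t with
  | nil => intro a _ _; exact Q.one a
  | cons b t' ih =>
    intro a hs heq
    obtain ⟨hle, hs'⟩ := List.pairwise_cons.mp hs
    have hab : a ≤ b := hle b (by simp)
    have h1 := L1 t' b hs'
    have hlc : lC (a :: b :: t') =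
        (b :: t').countP (fun x => decide (x ≤ a + 1)) + lC (b :: t') := rfl
    have hgl : gl a (b :: t') = gl b t' := rfl
    have hlen1 : (a :: b :: t').length = (b :: t').length + 1 := rfl
    have hkey : a + 2 ≤ 2 * (b :: t').countP (fun x => decide (x ≤ a + 1)) + b := by
      by_cases hba : b ≤ a + 1
      · have hcp : (b :: t').countP (fun x => decide (x ≤ a + 1)) =
            t'.countP (fun x => decide (x ≤ a + 1)) + 1 :=
          List.countP_cons_of_pos (by simpa using hba)
        omega
      · omega
    have heq' : 2 * (b :: t').length + b = 2 * lC (b :: t') + gl b t' + 2 := by omega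
    have hceq : 2 * (b :: t').countP (fun x => decide (x ≤ a + 1)) + b = a + 2 := by omega
    have hQ' := ih b hs' heq'
    rcases (by omega : b = a ∨ b = a + 2) with hba | hba
    · -- b = a, c = 1
      subst hba
      have hcp : (b :: t').countP (fun x => decide (x ≤ b + 1)) =
          t'.countP (fun x => decide (x ≤ b + 1)) + 1 :=
        List.countP_cons_of_pos (by simp)
      have hc1 : t'.countP (fun x => decide (x ≤ b + 1)) = 0 := by omega
      have hbig : ∀ x ∈ t', ¬ (x ≤ b + 1) := by
        intro x hx
        have := List.countP_eq_zero.mp hc1 x hx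
        simpa using this
      cases hQ' with
      | one => exact Q.two b
      | two => exact absurd (hbig b (by simp)) (by omega)
      | cons1 a₀ t₀ h => exact Q.cons2 b t₀ h
      | cons2 a₀ t₀ h => exact absurd (hbig b (by simp)) (by omega)
    · subst hba
      exact Q.cons1 a t' hQ'

theorem L3 : ∀ {l : List ℕ}, Q l → ∀ a t, l = a :: t → l.length + a ≤ gl a t + 2 := by
  intro l h
  induction h with
  | one a₀ =>
    intro a t heq
    cases heq
    simp only [List.length_cons, List.length_nil, gl]
    omega
  | two a₀ =>
    intro a t heq
    cases heq
    simp only [List.length_cons, List.length_nil, gl]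
    omega
  | cons1 a₀ t₀ h ih =>
    intro a t heq
    cases heq
    have h3 := ih (a₀ + 2) t₀ rfl
    have hgl : gl a₀ ((a₀ + 2) :: t₀) = gl (a₀ + 2) t₀ := rfl
    have hlen : (a₀ :: (a₀ + 2) :: t₀).length = ((a₀ + 2) :: t₀).length + 1 := rfl
    omega
  | cons2 a₀ t₀ h ih =>
    intro a t heq
    cases heq
    have h3 := ih (a₀ + 2) t₀ rfl
    have hgl : gl a₀ (a₀ :: (a₀ + 2) :: t₀) = gl (a₀ + 2) t₀ := rfl
    have hlen : (a₀ :: a₀ :: (a₀ + 2) :: t₀).length = ((a₀ + 2) :: t₀).length + 2 := rfl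
    omega

theorem L3' : ∀ {l : List ℕ}, Q l → ∀ a t, l = a :: t →
    (∃ t'', t = a :: t'') ∨ l.length + a ≤ gl a t + 1 := by
  intro l h
  cases h with
  | one a₀ =>
    intro a t heq; cases heq; right
    simp only [List.length_cons, List.length_nil, gl]
    omega
  | two a₀ => intro a t heq; cases heq; left; exact ⟨[], rfl⟩
  | cons1 a₀ t₀ h =>
    intro a t heq
    cases heq
    right
    have h3 := L3 h (a₀ + 2) t₀ rfl
    have hgl : gl a₀ ((a₀ + 2) :: t₀) = gl (a₀ + 2) t₀ := rfl
    have hlen : (a₀ :: (a₀ + 2) :: t₀).length = ((a₀ + 2) :: t₀).length + 1 := rfl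
    omega
  | cons2 a₀ t₀ h =>
    intro a t heq; cases heq; left; exact ⟨(a₀ + 2) :: t₀, rfl⟩

theorem L4 : ∀ {l : List ℕ}, Q l → ∀ a t, l = a :: t → l.length + a = gl a t + 2 →
    2 ≤ l.countP (fun x => decide (x = a)) ∧ 2 ≤ l.countP (fun x => decide (x = gl a t)) := by
  intro l h
  induction h with
  | one a₀ =>
    intro a t heq hlen
    cases heq
    exfalso
    have hgl : gl a₀ ([] : List ℕ) = a₀ := rfl
    have : ([a₀] : List ℕ).length = 1 := rfl
    omega
  | two a₀ =>
    intro a t heq hlen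
    cases heq
    have hgl : gl a₀ [a₀] = a₀ := rfl
    rw [hgl]
    have hcp : ([a₀, a₀] : List ℕ).countP (fun x => decide (x = a₀)) = 2 := by
      rw [List.countP_cons_of_pos (by simp), List.countP_cons_of_pos (by simp)]
      rfl
    omega
  | cons1 a₀ t₀ h ih =>
    intro a t heq hlen
    cases heq
    exfalso
    have h3 := L3 h (a₀ + 2) t₀ rfl
    have hgl : gl a₀ ((a₀ + 2) :: t₀) = gl (a₀ + 2) t₀ := rfl
    have hlen1 : (a₀ :: (a₀ + 2) :: t₀).length = ((a₀ + 2) :: t₀).length + 1 := rfl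
    omega
  | cons2 a₀ t₀ h ih =>
    intro a t heq hlen
    cases heq
    have hgl : gl a₀ (a₀ :: (a₀ + 2) :: t₀) = gl (a₀ + 2) t₀ := rfl
    have hlen1 : (a₀ :: a₀ :: (a₀ + 2) :: t₀).length = ((a₀ + 2) :: t₀).length + 2 := rfl
    have hlen2 : ((a₀ + 2) :: t₀).length = t₀.length + 1 := rfl
    have hlen' : ((a₀ + 2) :: t₀).length + (a₀ + 2) = gl (a₀ + 2) t₀ + 2 := by omega
    have hih := ih (a₀ + 2) t₀ rfl hlen'
    have hgbig : a₀ + 1 ≤ gl (a₀ + 2) t₀ := by omega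
    rw [hgl]
    constructor
    · have e1 : (a₀ :: a₀ :: (a₀ + 2) :: t₀).countP (fun x => decide (x = a₀)) =
          ((a₀ :: (a₀ + 2) :: t₀).countP (fun x => decide (x = a₀))) + 1 :=
        List.countP_cons_of_pos (by simp)
      have e2 : (a₀ :: (a₀ + 2) :: t₀).countP (fun x => decide (x = a₀)) =
          (((a₀ + 2) :: t₀).countP (fun x => decide (x = a₀))) + 1 :=
        List.countP_cons_of_pos (by simp)
      omega
    · have hne : ¬ (a₀ = gl (a₀ + 2) t₀) := by omega
      have e1 : (a₀ :: a₀ :: (a₀ + 2) :: t₀).countP (fun x => decide (x = gl (a₀ + 2) t₀)) =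
          (a₀ :: (a₀ + 2) :: t₀).countP (fun x => decide (x = gl (a₀ + 2) t₀)) :=
        List.countP_cons_of_neg (by simpa using hne)
      have e2 : (a₀ :: (a₀ + 2) :: t₀).countP (fun x => decide (x = gl (a₀ + 2) t₀)) =
          ((a₀ + 2) :: t₀).countP (fun x => decide (x = gl (a₀ + 2) t₀)) :=
        List.countP_cons_of_neg (by simpa using hne)
      omega

theorem L5 : ∀ (t : List ℕ) (a : ℕ), (a :: t).Pairwise (· ≤ ·) →
    2 * (a :: t).length + a + 1 = 2 * lC (a :: t) + gl a t + 2 →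
    ((a :: t).length + a ≤ gl a t + 1 ∧
      ∀ b t', t = b :: t' → a + 2 ≤ b → (a :: t).length + a ≤ gl a t) := by
  intro t
  induction t with
  | nil =>
    intro a _ heq
    exfalso
    have h1 : ([a] : List ℕ).length = 1 := rfl
    have h2 : lC [a] = 0 := rfl
    have h3 : gl a ([] : List ℕ) = a := rfl
    omega
  | cons b t' ih =>
    intro a hs heq
    obtain ⟨hle, hs'⟩ := List.pairwise_cons.mp hs
    have hab : a ≤ b := hle b (by simp)
    have h1 := L1 t' b hs'
    have hlc : lC (a :: b :: t') =
        (b :: t').countP (fun x => decide (x ≤ a + 1)) + lC (b :: t') := rfl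
    have hgl : gl a (b :: t') = gl b t' := rfl
    have hlen1 : (a :: b :: t').length = (b :: t').length + 1 := rfl
    -- countP facts
    have hcz : a + 2 ≤ b → (b :: t').countP (fun x => decide (x ≤ a + 1)) = 0 := by
      intro h2b
      apply List.countP_eq_zero.mpr
      intro x hx
      have hbx : b ≤ x := by
        rcases List.mem_cons.mp hx with rfl | hx'
        · exact le_refl x
        · exact (List.pairwise_cons.mp hs').1 x hx'
      simp
      omega
    have hcp : b ≤ a + 1 → (b :: t').countP (fun x => decide (x ≤ a + 1)) =
        t'.countP (fun x => decide (x ≤ a + 1)) + 1 := fun hba =>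
      List.countP_cons_of_pos (by simpa using hba)
    have hb4 : b = a ∨ b = a + 1 ∨ b = a + 2 ∨ b = a + 3 := by
      by_cases hba : b ≤ a + 1
      · have := hcp hba; omega
      · have := hcz (by omega); omega
    rcases hb4 with hb | hb | hb | hb
    · -- b = a : slack 1 passes down, c = 1, second element of t' (if any) is ≥ a+2
      subst hb
      have hcp1 := hcp (by omega)
      have hc1 : t'.countP (fun x => decide (x ≤ b + 1)) = 0 := by omega
      cases t' with
      | nil =>
        exfalso
        have e1 : lC (b :: ([] : List ℕ)) = 0 := rfl
        have e2 : gl b ([] : List ℕ) = b := rfl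
        have e3 : ([b] : List ℕ).length = 1 := rfl
        omega
      | cons b₂ t'' =>
        have hb₂ : b + 2 ≤ b₂ := by
          have := List.countP_eq_zero.mp hc1 b₂ (by simp)
          simp at this
          omega
        have heq'' : 2 * (b :: b₂ :: t'').length + b + 1 =
            2 * lC (b :: b₂ :: t'') + gl b (b₂ :: t'') + 2 := by omega
        have hih := (ih b hs' heq'').2 b₂ t'' rfl hb₂
        constructor
        · omega
        · intro b' t₂ hteq h2b
          exfalso
          cases hteq
          omega
    · -- b = a + 1 : slack 0 below, Q, no dup head
      subst hb
      have hcp1 := hcp (by omega)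
      have hc1 : t'.countP (fun x => decide (x ≤ a + 1)) = 0 := by omega
      have heq'' : 2 * ((a + 1) :: t').length + (a + 1) =
          2 * lC ((a + 1) :: t') + gl (a + 1) t' + 2 := by omega
      have hQ := L2 t' (a + 1) hs' heq''
      rcases L3' hQ (a + 1) t' rfl with ⟨t'', rfl⟩ | h3
      · exfalso
        have := List.countP_eq_zero.mp hc1 (a + 1) (by simp)
        simp at this
      · constructor
        · omega
        · intro b' t₂ hteq h2b
          exfalso
          cases hteq
          omega
    · -- b = a + 2 : slack 1 below
      subst hb
      have hc0 := hcz (by omega)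
      have heq'' : 2 * ((a + 2) :: t').length + (a + 2) + 1 =
          2 * lC ((a + 2) :: t') + gl (a + 2) t' + 2 := by omega
      have hih := (ih (a + 2) hs' heq'').1
      exact ⟨by omega, fun b' t₂ hteq h2b => by cases hteq; omega⟩
    · -- b = a + 3 : slack 0 below, Q
      subst hb
      have hc0 := hcz (by omega)
      have heq'' : 2 * ((a + 3) :: t').length + (a + 3) =
          2 * lC ((a + 3) :: t') + gl (a + 3) t' + 2 := by omega
      have hQ := L2 t' (a + 3) hs' heq''
      have h3 := L3 hQ (a + 3) t' rfl
      exact ⟨by omega, fun b' t₂ hteq h2b => by cases hteq; omega⟩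

theorem NUM (t : List ℕ) (a : ℕ) (hs : (a :: t).Pairwise (· ≤ ·))
    (hn : 3 ≤ (a :: t).length) (hspan : gl a t + 2 ≤ a + (a :: t).length) :
    (((a :: t).length + 1) / 2 + 1 ≤ lC (a :: t)) ∨
    (gl a t + 2 = a + (a :: t).length ∧
      2 ≤ (a :: t).countP (fun x => decide (x = a)) ∧
      2 ≤ (a :: t).countP (fun x => decide (x = gl a t))) := by
  by_cases hC : ((a :: t).length + 1) / 2 + 1 ≤ lC (a :: t)
  · exact Or.inl hC
  · right
    have h1 := L1 t a hs
    have hcase : (2 * (a :: t).length + a = 2 * lC (a :: t) + gl a t + 2 ∧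
          gl a t + 2 = a + (a :: t).length) ∨
        (2 * (a :: t).length + a = 2 * lC (a :: t) + gl a t + 2 ∧
          gl a t + 3 = a + (a :: t).length) ∨
        (2 * (a :: t).length + a + 1 = 2 * lC (a :: t) + gl a t + 2 ∧
          gl a t + 2 = a + (a :: t).length) := by omega
    rcases hcase with ⟨hEq, hSp⟩ | ⟨hEq, hSp⟩ | ⟨hEq, hSp⟩
    · have hQ := L2 t a hs hEq
      have h4 := L4 hQ a t rfl (by omega)
      exact ⟨hSp, h4⟩
    · exfalso
      have hQ := L2 t a hs hEq
      have h3 := L3 hQ a t rfl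
      omega
    · exfalso
      have h5 := (L5 t a hs hEq).1
      omega

theorem CP {α : Type*} [DecidableEq α] (p : α → Prop) [DecidablePred p] :
    ∀ (l : List α), l.Nodup → l.countP (fun x => decide (p x)) = (l.toFinset.filter p).card := by
  intro l
  induction l with
  | nil => intro _; simp
  | cons a t ih =>
    intro hnd
    obtain ⟨hat, ht⟩ := List.nodup_cons.mp hnd
    rw [List.countP_cons, List.toFinset_cons, Finset.filter_insert]
    by_cases hp : p a
    · rw [if_pos hp, Finset.card_insert_of_notMem (fun hmem => hat
        (List.mem_toFinset.mp (Finset.mem_of_mem_filter a hmem)))]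
      simp [hp, ih ht]
    · rw [if_neg hp]
      simp [hp, ih ht]

theorem bridge {n : ℕ} (dg : Fin n → ℕ) :
    ∀ (vs : List (Fin n)), vs.Nodup → (vs.map dg).Pairwise (· ≤ ·) →
      lC (vs.map dg) ≤ ((Finset.univ : Finset (Fin n × Fin n)).filter
        (fun p => p.1 ∈ vs ∧ p.2 ∈ vs ∧ p.1 < p.2 ∧
          dg p.2 ≤ dg p.1 + 1 ∧ dg p.1 ≤ dg p.2 + 1)).card := by
  intro vs
  induction vs with
  | nil => intro _ _; simp [lC]
  | cons v t ih =>
    intro hnd hsort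
    obtain ⟨hvt, hndt⟩ := List.nodup_cons.mp hnd
    rw [List.map_cons] at hsort
    obtain ⟨hhead, hsort'⟩ := List.pairwise_cons.mp hsort
    have hlc : lC (List.map dg (v :: t)) =
        (List.map dg t).countP (fun x => decide (x ≤ dg v + 1)) + lC (List.map dg t) := rfl
    set A := ((Finset.univ : Finset (Fin n × Fin n)).filter
      (fun p => p.1 ∈ v :: t ∧ p.2 ∈ v :: t ∧ p.1 < p.2 ∧
        dg p.2 ≤ dg p.1 + 1 ∧ dg p.1 ≤ dg p.2 + 1)) with hA
    set B := ((Finset.univ : Finset (Fin n × Fin n)).filter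
      (fun p => p.1 ∈ t ∧ p.2 ∈ t ∧ p.1 < p.2 ∧
        dg p.2 ≤ dg p.1 + 1 ∧ dg p.1 ≤ dg p.2 + 1)) with hB
    have hsplit : (A.filter (fun p => p.1 = v ∨ p.2 = v)).card +
        (A.filter (fun p => ¬(p.1 = v ∨ p.2 = v))).card = A.card :=
      Finset.card_filter_add_card_filter_not _
    have hBsub : B ⊆ A.filter (fun p => ¬(p.1 = v ∨ p.2 = v)) := by
      intro p hp
      rw [hB, Finset.mem_filter] at hp
      obtain ⟨-, h1, h2, h3, h4⟩ := hp
      rw [Finset.mem_filter, hA, Finset.mem_filter]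
      refine ⟨⟨Finset.mem_univ _, List.mem_cons_of_mem _ h1, List.mem_cons_of_mem _ h2, h3, h4⟩, ?_⟩
      rintro (rfl | rfl)
      · exact hvt h1
      · exact hvt h2
    -- count of close-to-v elements
    have hcnt : (List.map dg t).countP (fun x => decide (x ≤ dg v + 1)) =
        (t.toFinset.filter (fun u => dg u ≤ dg v + 1)).card := by
      rw [List.countP_map]
      exact CP (fun u => dg u ≤ dg v + 1) t hndt
    have hinj : (t.toFinset.filter (fun u => dg u ≤ dg v + 1)).card ≤
        (A.filter (fun p => p.1 = v ∨ p.2 = v)).card := by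
      apply Finset.card_le_card_of_injOn (fun u => if v < u then (v, u) else (u, v))
      · intro u hu
        rw [Finset.mem_coe, Finset.mem_filter, List.mem_toFinset] at hu
        obtain ⟨hut, hclose⟩ := hu
        have hne : u ≠ v := fun h => hvt (h ▸ hut)
        have hvu : dg v ≤ dg u := hhead (dg u) (List.mem_map_of_mem (f := dg) hut)
        beta_reduce
        rw [Finset.mem_coe, Finset.mem_filter, hA, Finset.mem_filter]
        by_cases hlt : v < u
        · rw [if_pos hlt]
          exact ⟨⟨Finset.mem_univ _, List.mem_cons_self, List.mem_cons_of_mem _ hut,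
            hlt, hclose, hvu.trans (Nat.le_succ _)⟩, Or.inl rfl⟩
        · rw [if_neg hlt]
          have hult : u < v := lt_of_le_of_ne (not_lt.mp hlt) hne
          exact ⟨⟨Finset.mem_univ _, List.mem_cons_of_mem _ hut, List.mem_cons_self,
            hult, hvu.trans (Nat.le_succ _), hclose⟩, Or.inr rfl⟩
      · intro u₁ h₁ u₂ h₂ heq
        have hne₁ : u₁ ≠ v := by
          rw [Finset.coe_filter] at h₁
          obtain ⟨hmem, -⟩ := h₁
          exact fun h => hvt (h ▸ List.mem_toFinset.mp hmem)
        have hne₂ : u₂ ≠ v := by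
          rw [Finset.coe_filter] at h₂
          obtain ⟨hmem, -⟩ := h₂
          exact fun h => hvt (h ▸ List.mem_toFinset.mp hmem)
        simp only at heq
        split_ifs at heq with hl₁ hl₂ hl₂ <;> simp only [Prod.mk.injEq] at heq
        · exact heq.2
        · exact absurd heq.2 hne₁
        · exact absurd heq.1 hne₁
        · exact heq.1
    have hBcard := ih hndt hsort'
    calc lC (List.map dg (v :: t)) =
        (List.map dg t).countP (fun x => decide (x ≤ dg v + 1)) + lC (List.map dg t) := hlc
      _ ≤ (A.filter (fun p => p.1 = v ∨ p.2 = v)).card +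
          (A.filter (fun p => ¬(p.1 = v ∨ p.2 = v))).card := by
          have := Finset.card_le_card hBsub
          omega
      _ = A.card := hsplit

end CCAux

/-- Number of unordered pairs of distinct vertices whose degrees differ by less than `k`. -/
noncomputable def closeCount (n k : ℕ) (G : SimpleGraph (Fin n)) : ℕ :=
  (Finset.univ.filter (fun p : Fin n × Fin n =>
    p.1 < p.2 ∧ |(G.degree p.1 : ℤ) - (G.degree p.2 : ℤ)| < k)).card

theorem stmt_5 (n : ℕ) (hn : 3 ≤ n) (G : SimpleGraph (Fin n)) :
    (n + 1) / 2 + 1 ≤ closeCount n 2 G := by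
  classical
  have hdegb : ∀ u : Fin n, G.degree u + 1 ≤ n := by
    intro u
    have := G.degree_lt_card_verts u
    simp only [Fintype.card_fin] at this
    omega
  -- the sorted vertex list
  have htrans : ∀ a b c : Fin n, (fun u w => decide (G.degree u ≤ G.degree w)) a b →
      (fun u w => decide (G.degree u ≤ G.degree w)) b c →
      (fun u w => decide (G.degree u ≤ G.degree w)) a c := by
    intro a b c h₁ h₂
    simp only [decide_eq_true_eq] at *
    omega
  have htot : ∀ a b : Fin n, ((fun u w => decide (G.degree u ≤ G.degree w)) a b
      || (fun u w => decide (G.degree u ≤ G.degree w)) b a) := by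
    intro a b
    simpa using Nat.le_total (G.degree a) (G.degree b)
  set vs : List (Fin n) :=
    (List.finRange n).mergeSort (fun u w => decide (G.degree u ≤ G.degree w)) with hvs
  have hperm : vs.Perm (List.finRange n) := List.mergeSort_perm _ _
  have hnd : vs.Nodup := hperm.nodup_iff.mpr (List.nodup_finRange n)
  have hlen : vs.length = n := by rw [hperm.length_eq, List.length_finRange]
  have htf : vs.toFinset = Finset.univ := by
    apply Finset.eq_univ_of_forall
    intro x
    rw [List.mem_toFinset, hperm.mem_iff]
    exact List.mem_finRange x
  have hpw : vs.Pairwise (fun u w => G.degree u ≤ G.degree w) := by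
    have hpwb := List.pairwise_mergeSort htrans htot (List.finRange n)
    rw [hvs]
    exact hpwb.imp (fun h => by simpa using h)
  have hsort : (vs.map (fun u => G.degree u)).Pairwise (· ≤ ·) := by
    show (vs.map (fun u => G.degree u)).Pairwise (· ≤ ·)
    exact (List.pairwise_map (f := fun u => G.degree u) (R := ((· ≤ ·) : ℕ → ℕ → Prop))).mpr hpw
  obtain ⟨v, t, hvt⟩ : ∃ v t, vs = v :: t := by
    cases hv : vs with
    | nil => rw [hv] at hlen; simp at hlen; omega
    | cons v t => exact ⟨v, t, rfl⟩
  have hmapc : vs.map (fun u => G.degree u) = G.degree v :: t.map (fun u => G.degree u) := by rw [hvt, List.map_cons]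
  have hsortc : (G.degree v :: t.map (fun u => G.degree u)).Pairwise (· ≤ ·) := hmapc ▸ hsort
  have hlenc : (G.degree v :: t.map (fun u => G.degree u)).length = n := by
    rw [← hmapc, List.length_map, hlen]
  set g : ℕ := CCAux.gl (G.degree v) (t.map (fun u => G.degree u)) with hgdef
  obtain ⟨w₀, hw₀⟩ : ∃ w : Fin n, G.degree w = g := by
    have hmem : g ∈ vs.map (fun u => G.degree u) := by rw [hmapc]; exact CCAux.gl_mem _ _
    obtain ⟨w, -, hw⟩ := List.mem_map.mp hmem
    exact ⟨w, hw⟩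
  have hspan : g + 2 ≤ G.degree v + n := by
    by_cases hv0 : G.degree v = 0
    · by_cases hwv : w₀ = v
      · rw [hwv, hv0] at hw₀; omega
      · have hnb : G.neighborFinset w₀ ⊆ Finset.univ \ {w₀, v} := by
          intro x hx
          rw [SimpleGraph.mem_neighborFinset] at hx
          rw [Finset.mem_sdiff]
          refine ⟨Finset.mem_univ _, ?_⟩
          simp only [Finset.mem_insert, Finset.mem_singleton]
          rintro (h | h)
          · exact G.irrefl (h ▸ hx)
          · have hmem : w₀ ∈ G.neighborFinset v := by
              rw [SimpleGraph.mem_neighborFinset]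
              exact (h ▸ hx).symm
            have hpos := Finset.card_pos.mpr ⟨w₀, hmem⟩
            rw [G.card_neighborFinset_eq_degree] at hpos
            omega
        have hcard := Finset.card_le_card hnb
        rw [G.card_neighborFinset_eq_degree] at hcard
        have hc2 : (Finset.univ \ {w₀, v} : Finset (Fin n)).card = n - 2 := by
          rw [Finset.card_sdiff_of_subset (Finset.subset_univ _), Finset.card_univ, Fintype.card_fin,
            Finset.card_insert_of_notMem (by simpa using hwv), Finset.card_singleton]
        rw [hc2, hw₀] at hcard
        omega
    · have := hdegb w₀
      omega
  have hnum := CCAux.NUM (t.map (fun u => G.degree u)) (G.degree v) hsortc (by omega)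
    (by rw [hlenc]; exact hspan)
  rw [hlenc] at hnum
  rcases hnum with hok | ⟨hspEq, hca, hcg⟩
  · -- generic bound suffices
    have hb' := CCAux.bridge (fun u => G.degree u) vs hnd hsort
    rw [hmapc] at hb'
    have hb : CCAux.lC (G.degree v :: t.map (fun u => G.degree u)) ≤
        ((Finset.univ : Finset (Fin n × Fin n)).filter
          (fun p => p.1 ∈ vs ∧ p.2 ∈ vs ∧ p.1 < p.2 ∧
            G.degree p.2 ≤ G.degree p.1 + 1 ∧ G.degree p.1 ≤ G.degree p.2 + 1)).card := hb'
    have hsub : ((Finset.univ : Finset (Fin n × Fin n)).filter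
        (fun p => p.1 ∈ vs ∧ p.2 ∈ vs ∧ p.1 < p.2 ∧
          G.degree p.2 ≤ G.degree p.1 + 1 ∧ G.degree p.1 ≤ G.degree p.2 + 1)) ⊆
        (Finset.univ.filter (fun p : Fin n × Fin n =>
          p.1 < p.2 ∧ |(G.degree p.1 : ℤ) - (G.degree p.2 : ℤ)| < ((2 : ℕ) : ℤ))) := by
      intro p hp
      rw [Finset.mem_filter] at hp ⊢
      obtain ⟨hu, -, -, hlt, h1, h2⟩ := hp
      refine ⟨hu, hlt, ?_⟩
      rw [abs_lt]
      constructor <;> push_cast <;> omega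
    have hcc : closeCount n 2 G = (Finset.univ.filter (fun p : Fin n × Fin n =>
        p.1 < p.2 ∧ |(G.degree p.1 : ℤ) - (G.degree p.2 : ℤ)| < ((2 : ℕ) : ℤ))).card := rfl
    have hle := Finset.card_le_card hsub
    omega
  · -- exceptional case: impossible in a simple graph
    exfalso
    have key : ∀ x : ℕ, 2 ≤ (vs.map (fun u => G.degree u)).countP (fun y => decide (y = x)) →
        ∃ u u' : Fin n, u ≠ u' ∧ G.degree u = x ∧ G.degree u' = x := by
      intro x hx
      rw [List.countP_map] at hx
      have hcp := CCAux.CP (fun u : Fin n => G.degree u = x) vs hnd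
      rw [htf] at hcp
      have hx2 : 2 ≤ ((Finset.univ : Finset (Fin n)).filter
          (fun u => G.degree u = x)).card := by
        rw [← hcp]
        exact hx
      obtain ⟨u, hu, u', hu', hne⟩ := (Finset.one_lt_card
        (s := (Finset.univ : Finset (Fin n)).filter (fun u => G.degree u = x))).mp (by omega)
      rw [Finset.mem_filter] at hu hu'
      exact ⟨u, u', hne, hu.2, hu'.2⟩
    obtain ⟨u₁, u₂, hu12, hdu₁, hdu₂⟩ := key (G.degree v) (by rw [hmapc]; exact hca)
    obtain ⟨w₁, w₂, hw12, hdw₁, hdw₂⟩ := key g (by rw [hmapc]; exact hcg)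
    by_cases hv0 : G.degree v = 0
    · -- two isolated vertices and a vertex of degree n - 2
      have hzero : ∀ z : Fin n, G.degree z = 0 → ∀ x : Fin n, ¬ G.Adj z x := by
        intro z hz x hadj
        have hmem : x ∈ G.neighborFinset z := by
          rw [SimpleGraph.mem_neighborFinset]; exact hadj
        have hpos := Finset.card_pos.mpr ⟨x, hmem⟩
        rw [G.card_neighborFinset_eq_degree] at hpos
        omega
      have hwu₁ : w₁ ≠ u₁ := by
        intro h
        rw [h, hdu₁, hv0] at hdw₁
        omega
      have hwu₂ : w₁ ≠ u₂ := by
        intro h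
        rw [h, hdu₂, hv0] at hdw₁
        omega
      have hnb : G.neighborFinset w₁ ⊆ Finset.univ \ {w₁, u₁, u₂} := by
        intro x hx
        rw [SimpleGraph.mem_neighborFinset] at hx
        rw [Finset.mem_sdiff]
        refine ⟨Finset.mem_univ _, ?_⟩
        simp only [Finset.mem_insert, Finset.mem_singleton]
        rintro (h | h | h)
        · exact G.irrefl (h ▸ hx)
        · exact hzero u₁ (by rw [hdu₁, hv0]) w₁ ((h ▸ hx).symm)
        · exact hzero u₂ (by rw [hdu₂, hv0]) w₁ ((h ▸ hx).symm)
      have hcard := Finset.card_le_card hnb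
      rw [G.card_neighborFinset_eq_degree] at hcard
      have hc3 : ({w₁, u₁, u₂} : Finset (Fin n)).card = 3 := by
        rw [Finset.card_insert_of_notMem (by simp [hwu₁, hwu₂]),
          Finset.card_insert_of_notMem (by simpa using hu12), Finset.card_singleton]
      have hc : (Finset.univ \ {w₁, u₁, u₂} : Finset (Fin n)).card = n - 3 := by
        rw [Finset.card_sdiff_of_subset (Finset.subset_univ _), Finset.card_univ, Fintype.card_fin, hc3]
      rw [hc] at hcard
      omega
    · -- two vertices adjacent to everything and a vertex of degree 1
      have hg : g + 1 ≤ n := by rw [← hdw₁]; exact hdegb w₁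
      have hadj : ∀ w : Fin n, G.degree w = g → ∀ x : Fin n, x ≠ w → G.Adj w x := by
        intro w hw x hxw
        have hsub : G.neighborFinset w ⊆ Finset.univ.erase w := by
          intro y hy
          rw [SimpleGraph.mem_neighborFinset] at hy
          exact Finset.mem_erase.mpr ⟨hy.ne', Finset.mem_univ _⟩
        have hcard : (Finset.univ.erase w : Finset (Fin n)).card ≤
            (G.neighborFinset w).card := by
          rw [Finset.card_erase_of_mem (Finset.mem_univ _), Finset.card_univ, Fintype.card_fin,
            G.card_neighborFinset_eq_degree, hw]
          omega
        have heqs := Finset.eq_of_subset_of_card_le hsub hcard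
        have hmem : x ∈ G.neighborFinset w := by
          rw [heqs]
          exact Finset.mem_erase.mpr ⟨hxw, Finset.mem_univ _⟩
        rw [SimpleGraph.mem_neighborFinset] at hmem
        exact hmem
      have hu₁w₁ : u₁ ≠ w₁ := by
        intro h
        rw [h, hdw₁] at hdu₁
        omega
      have hu₁w₂ : u₁ ≠ w₂ := by
        intro h
        rw [h, hdw₂] at hdu₁
        omega
      have hsub2 : ({w₁, w₂} : Finset (Fin n)) ⊆ G.neighborFinset u₁ := by
        intro x hx
        rw [SimpleGraph.mem_neighborFinset]
        rcases Finset.mem_insert.mp hx with h | h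
        · exact h ▸ ((hadj w₁ hdw₁ u₁ hu₁w₁).symm)
        · exact (Finset.mem_singleton.mp h) ▸ ((hadj w₂ hdw₂ u₁ hu₁w₂).symm)
      have hle2 := Finset.card_le_card hsub2
      rw [Finset.card_pair hw12, G.card_neighborFinset_eq_degree, hdu₁] at hle2
      omega
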